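/- Let K be a local field of characteristic p, m > 0 prime to p, and L = K(α) where α^p − α = a with v_K(a) = −m. Then the valuation of the different of L|K satisfies v_L(D_{L|K}) = (p−1)(1+m), and the valuation of the discriminant satisfies v_K(d_{L|K}) = (p−1)(1+m). -/

import Mathlib

open IntermediateField Polynomial

set_option maxHeartbeats 1000000
set_option synthInstance.maxHeartbeats 400000

namespace Stmt16

variable {L : Type*} [Field L] (w : L → ℤ)

section W
variable (hmul : ∀ u v : L, u ≠ 0 → v ≠ 0 → w (u * v) = w u + w v)
  (hadd : ∀ u v : L, u ≠ 0 → v ≠ 0 → u + v ≠ 0 → min (w u) (w v) ≤ w (u + v))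

include hmul

theorem w_one : w 1 = 0 := by
  have h := hmul 1 1 one_ne_zero one_ne_zero
  rw [one_mul] at h; omega

theorem w_neg {u : L} (hu : u ≠ 0) : w (-u) = w u := by
  have h1 := hmul (-1) (-1) (neg_ne_zero.2 (one_ne_zero (α := L))) (neg_ne_zero.2 one_ne_zero)
  rw [neg_mul_neg, one_mul] at h1
  have h2 := hmul (-1) u (neg_ne_zero.2 one_ne_zero) hu
  rw [neg_one_mul] at h2
  have h3 := w_one w hmul
  omega

theorem w_inv {u : L} (hu : u ≠ 0) : w u⁻¹ = - w u := by
  have h := hmul u u⁻¹ hu (inv_ne_zero hu)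
  rw [mul_inv_cancel₀ hu, w_one w hmul] at h
  omega

theorem w_pow {u : L} (hu : u ≠ 0) (n : ℕ) : w (u ^ n) = n * w u := by
  induction n with
  | zero => simpa using w_one w hmul
  | succ n ih =>
    have h := hmul (u ^ n) u (pow_ne_zero _ hu) hu
    rw [← pow_succ] at h
    rw [h, ih]; push_cast; ring

theorem w_zpow {u : L} (hu : u ≠ 0) (t : ℤ) : w (u ^ t) = t * w u := by
  cases t with
  | ofNat n => rw [Int.ofNat_eq_coe, zpow_natCast, w_pow w hmul hu n]
  | negSucc n =>
    rw [zpow_negSucc, w_inv w hmul (pow_ne_zero _ hu), w_pow w hmul hu, Int.negSucc_eq]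
    push_cast; ring

include hadd

theorem w_add_lt {u v : L} (hu : u ≠ 0) (hv : v ≠ 0) (h : w u < w v) :
    u + v ≠ 0 ∧ w (u + v) = w u := by
  have hne : u + v ≠ 0 := by
    intro h0
    have hv' : v = -u := eq_neg_of_add_eq_zero_right h0
    have : w v = w u := by rw [hv', w_neg w hmul hu]
    omega
  refine ⟨hne, ?_⟩
  have h1 := hadd u v hu hv hne
  have h2 := hadd (u + v) (-v) hne (neg_ne_zero.2 hv) (by rw [add_neg_cancel_right]; exact hu)
  rw [add_neg_cancel_right, w_neg w hmul hv] at h2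
  omega

omit hmul in
theorem w_big_add {n : ℤ} {u v : L} (hu : u = 0 ∨ n ≤ w u) (hv : v = 0 ∨ n ≤ w v) :
    u + v = 0 ∨ n ≤ w (u + v) := by
  by_cases hu0 : u = 0
  · rw [hu0, zero_add]; exact hv
  by_cases hv0 : v = 0
  · rw [hv0, add_zero]; exact hu
  by_cases huv : u + v = 0
  · exact Or.inl huv
  right
  have h := hadd u v hu0 hv0 huv
  rcases hu with h'|h'; · exact absurd h' hu0
  rcases hv with h''|h''; · exact absurd h'' hv0
  omega

omit hadd in
theorem w_big_mul {n k : ℤ} {u v : L} (hu : u = 0 ∨ n ≤ w u) (hv : v = 0 ∨ k ≤ w v) :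
    u * v = 0 ∨ n + k ≤ w (u * v) := by
  by_cases hu0 : u = 0
  · rw [hu0, zero_mul]; exact Or.inl rfl
  by_cases hv0 : v = 0
  · rw [hv0, mul_zero]; exact Or.inl rfl
  right
  rw [hmul u v hu0 hv0]
  rcases hu with h'|h'; · exact absurd h' hu0
  rcases hv with h''|h''; · exact absurd h'' hv0
  omega

omit hadd in
theorem w_fermat {c : L} (hc : c ≠ 0) {p : ℕ} (hp : 2 ≤ p) (hcp : c ^ p = c) : w c = 0 := by
  have h1 : c ^ (p - 1) * c = 1 * c := by
    rw [← pow_succ, Nat.sub_add_cancel (by omega), hcp, one_mul]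
  have h2 : c ^ (p - 1) = 1 := mul_right_cancel₀ hc h1
  have h3 := w_pow w hmul hc (p - 1)
  rw [h2, w_one w hmul] at h3
  rcases mul_eq_zero.1 h3.symm with h | h
  · exfalso
    have : ((p - 1 : ℕ) : ℤ) ≠ 0 := by
      have : 1 ≤ p - 1 := by omega
      exact_mod_cast Nat.one_le_iff_ne_zero.mp this
    exact this h
  · exact h

omit hmul hadd in
theorem natCast_pow_char {p : ℕ} [Fact p.Prime] [CharP L p] (n : ℕ) : (n : L) ^ p = (n : L) := by
  induction n with
  | zero =>
    simp [zero_pow (Nat.Prime.ne_zero (Fact.out : p.Prime))]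
  | succ n ih =>
    push_cast
    rw [add_pow_char, ih, one_pow]

omit hadd in
theorem w_natCast_eq_zero {p : ℕ} [Fact p.Prime] [CharP L p] {n : ℕ} (hn : (n : L) ≠ 0) :
    w (n : L) = 0 :=
  w_fermat w hmul hn (Fact.out : p.Prime).two_le (natCast_pow_char n)

theorem w_geom {p : ℕ} [Fact p.Prime] [CharP L p] {u : L} (hu : u ≠ 0) (hw : 1 ≤ w u)
    (n : ℕ) :
    (1 + u) ^ n - 1 - (n : L) * u = 0 ∨ 2 * w u ≤ w ((1 + u) ^ n - 1 - (n : L) * u) := by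
  have h1u : (1 : L) + u ≠ 0 ∧ w (1 + u) = w 1 :=
    w_add_lt w hmul hadd one_ne_zero hu (by rw [w_one w hmul]; omega)
  induction n with
  | zero => left; simp
  | succ n ih =>
    have key : (1 + u) ^ (n + 1) - 1 - ((n + 1 : ℕ) : L) * u =
        ((1 + u) ^ n - 1 - (n : L) * u) * (1 + u) + (n : L) * u ^ 2 := by
      push_cast; ring
    rw [key]
    refine w_big_add w hadd ?_ ?_
    · have := w_big_mul w hmul (n := 2 * w u) (k := 0) ih
        (Or.inr (by rw [h1u.2, w_one w hmul] : (0 : ℤ) ≤ w (1 + u)))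
      simpa using this
    · have := w_big_mul w hmul (n := 0) (k := 2 * w u) (u := (n : L)) (v := u ^ 2)
        (by
          by_cases hn : (n : L) = 0
          · exact Or.inl hn
          · exact Or.inr (le_of_eq (w_natCast_eq_zero w hmul (p := p) hn).symm))
        (Or.inr (by rw [w_pow w hmul hu 2]; push_cast; omega))
      simpa using this

theorem w_one_add_pow_nat {p : ℕ} [Fact p.Prime] [CharP L p] {u : L} (hu : u ≠ 0)
    (hw : 1 ≤ w u) {n : ℕ} (hn : ¬ p ∣ n) :
    (1 + u) ^ n - 1 ≠ 0 ∧ w ((1 + u) ^ n - 1) = w u := by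
  have hnL : (n : L) ≠ 0 := by
    rw [Ne, CharP.cast_eq_zero_iff L p]; exact hn
  have hnu : (n : L) * u ≠ 0 := mul_ne_zero hnL hu
  have hwnu : w ((n : L) * u) = w u := by
    rw [hmul _ _ hnL hu, w_natCast_eq_zero w hmul (p := p) hnL, zero_add]
  have hsplit : (1 + u) ^ n - 1 = (n : L) * u + ((1 + u) ^ n - 1 - (n : L) * u) := by ring
  by_cases hg : (1 + u) ^ n - 1 - (n : L) * u = 0
  · rw [hsplit, hg, add_zero]
    exact ⟨hnu, hwnu⟩
  · have hbig : 2 * w u ≤ w ((1 + u) ^ n - 1 - (n : L) * u) :=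
      (w_geom w hmul hadd (p := p) hu hw n).resolve_left hg
    have := w_add_lt w hmul hadd hnu hg (by omega)
    rw [hsplit]
    exact ⟨this.1, by rw [this.2, hwnu]⟩

theorem w_one_add_zpow {p : ℕ} [Fact p.Prime] [CharP L p] {u : L} (hu : u ≠ 0)
    (hw : 1 ≤ w u) {t : ℤ} (ht : ¬ (p : ℤ) ∣ t) :
    (1 + u) ^ t - 1 ≠ 0 ∧ w ((1 + u) ^ t - 1) = w u := by
  have h1u : (1 : L) + u ≠ 0 ∧ w (1 + u) = w 1 :=
    w_add_lt w hmul hadd one_ne_zero hu (by rw [w_one w hmul]; omega)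
  cases t with
  | ofNat n =>
    have hn : ¬ p ∣ n := by
      intro hd; apply ht; rw [Int.ofNat_eq_coe]; exact_mod_cast hd
    rw [Int.ofNat_eq_coe, zpow_natCast]
    exact w_one_add_pow_nat w hmul hadd hu hw hn
  | negSucc n =>
    have hn : ¬ p ∣ (n + 1) := by
      intro hd
      apply ht
      rw [Int.negSucc_eq]
      exact (Int.natCast_dvd_natCast.2 hd).neg_right
    have hA : (1 + u) ^ (n + 1) ≠ 0 := pow_ne_zero _ h1u.1
    have hwA : w ((1 + u) ^ (n + 1)) = 0 := by
      rw [w_pow w hmul h1u.1, h1u.2, w_one w hmul, mul_zero]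
    obtain ⟨hne, hwe⟩ := w_one_add_pow_nat w hmul hadd hu hw (n := n + 1) hn
    have key : (1 + u) ^ (Int.negSucc n) - 1 =
        -(((1 + u) ^ (n + 1) - 1) * ((1 + u) ^ (n + 1))⁻¹) := by
      rw [zpow_negSucc]
      field_simp
      ring
    rw [key]
    have hprod : ((1 + u) ^ (n + 1) - 1) * ((1 + u) ^ (n + 1))⁻¹ ≠ 0 :=
      mul_ne_zero hne (inv_ne_zero hA)
    refine ⟨neg_ne_zero.2 hprod, ?_⟩
    rw [w_neg w hmul hprod, hmul _ _ hne (inv_ne_zero hA), hwe,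
      w_inv w hmul hA, hwA]
    ring

omit hadd in
theorem w_prod {ι : Type*} (s : Finset ι) (f : ι → L) (h : ∀ i ∈ s, f i ≠ 0) :
    w (∏ i ∈ s, f i) = ∑ i ∈ s, w (f i) := by
  classical
  induction s using Finset.cons_induction with
  | empty => simpa using w_one w hmul
  | cons a s ha ih =>
    rw [Finset.prod_cons, Finset.sum_cons,
      hmul _ _ (h a (Finset.mem_cons_self a s)) (Finset.prod_ne_zero_iff.2 fun i hi =>
        h i (Finset.mem_cons_of_mem hi)),
      ih fun i hi => h i (Finset.mem_cons_of_mem hi)]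

theorem w_sum {ι : Type*} (s : Finset ι) (f : ι → L) (h0 : ∀ i ∈ s, f i ≠ 0)
    (hdist : ∀ i ∈ s, ∀ j ∈ s, i ≠ j → w (f i) ≠ w (f j)) (hs : s.Nonempty) :
    (∑ i ∈ s, f i) ≠ 0 := by
  classical
  suffices h : (∑ i ∈ s, f i) ≠ 0 ∧ ∃ i ∈ s, w (∑ i ∈ s, f i) = w (f i) from h.1
  induction s using Finset.cons_induction with
  | empty => simp at hs
  | cons a s ha ih =>
    rcases s.eq_empty_or_nonempty with rfl | hs'
    · refine ⟨by simpa using h0 a (by simp), a, by simp, by simp⟩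
    · obtain ⟨hne, i, hi, hwi⟩ := ih (fun i hi => h0 i (Finset.mem_cons_of_mem hi))
        (fun i hi j hj hij => hdist i (Finset.mem_cons_of_mem hi) j
          (Finset.mem_cons_of_mem hj) hij) hs'
    
      have ha0 : f a ≠ 0 := h0 a (Finset.mem_cons_self a s)
      have hane : w (f a) ≠ w (∑ i ∈ s, f i) := by
        rw [hwi]
        exact hdist a (Finset.mem_cons_self a s) i (Finset.mem_cons_of_mem hi)
          (fun h => ha (h ▸ hi))
      rw [Finset.sum_cons]
      rcases lt_or_gt_of_ne hane with h | h
      · obtain ⟨h1, h2⟩ := w_add_lt w hmul hadd ha0 hne h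
        exact ⟨h1, a, Finset.mem_cons_self a s, h2⟩
      · obtain ⟨h1, h2⟩ := w_add_lt w hmul hadd hne ha0 h
        rw [add_comm] at h1 h2
        exact ⟨h1, i, Finset.mem_cons_of_mem hi, by rw [h2, hwi]⟩

end W

section Poly

theorem monic_eq_of_dvd {K : Type*} [Field K] {f g : K[X]} (hf : f.Monic) (hg : g.Monic)
    (hd : f ∣ g) (hdeg : g.natDegree ≤ f.natDegree) : f = g := by
  obtain ⟨c, rfl⟩ := hd
  have hf0 : f ≠ 0 := hf.ne_zero
  have hc0 : c ≠ 0 := by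
    rintro rfl
    rw [mul_zero] at hg
    exact (Polynomial.not_monic_zero) hg
  have hdeg2 : (f * c).natDegree = f.natDegree + c.natDegree :=
    Polynomial.natDegree_mul hf0 hc0
  have hcd : c.natDegree = 0 := by omega
  have hlc : f.leadingCoeff * c.leadingCoeff = 1 := by
    rw [← Polynomial.leadingCoeff_mul]; exact hg
  rw [hf.leadingCoeff, one_mul] at hlc
  have hcm : c.Monic := hlc
  rw [(Polynomial.Monic.natDegree_eq_zero hcm).1 hcd, mul_one]

theorem prod_X_sub_C_dvd {K : Type*} [Field K] {g : K[X]} {ι : Type*} (s : Finset ι)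
    (r : ι → K) (hinj : ∀ i ∈ s, ∀ j ∈ s, r i = r j → i = j)
    (hroot : ∀ i ∈ s, g.eval (r i) = 0) : (∏ i ∈ s, (X - C (r i))) ∣ g := by
  classical
  apply Finset.prod_dvd_of_coprime
  · intro i hi j hj hij
    refine Polynomial.isCoprime_X_sub_C_of_isUnit_sub ?_
    refine (sub_ne_zero.2 fun h => hij (hinj i hi j hj h)).isUnit
  · intro i hi
    exact Polynomial.dvd_iff_isRoot.2 (hroot i hi)

theorem eq_of_sub_eq_mul {p : ℕ} {i j : ℕ} (hi : i < p) (hj : j < p) {d : ℤ}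
    (h : (i : ℤ) - j = p * d) : i = j := by
  have hip : (i : ℤ) < p := by exact_mod_cast hi
  have hjp : (j : ℤ) < p := by exact_mod_cast hj
  have hi0 : (0 : ℤ) ≤ i := Int.natCast_nonneg i
  have hj0 : (0 : ℤ) ≤ j := Int.natCast_nonneg j
  have hp0 : (0 : ℤ) ≤ p := Int.natCast_nonneg p
  rcases lt_trichotomy d 0 with h' | h' | h'
  · have h1 : (p : ℤ) * d ≤ (p : ℤ) * (-1) := by nlinarith
    have : (i : ℤ) = j := by linarith
    exact_mod_cast this
  · rw [h', mul_zero] at h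
    have : (i : ℤ) = j := by linarith
    exact_mod_cast this
  · have h1 : (p : ℤ) * 1 ≤ (p : ℤ) * d := by nlinarith
    have : (i : ℤ) = j := by linarith
    exact_mod_cast this

theorem natCast_inj_of_lt {p : ℕ} {E : Type*} [Field E] [CharP E p] {i j : ℕ}
    (hi : i < p) (hj : j < p) (h : (i : E) = (j : E)) : i = j := by
  have h0 : (((i : ℤ) - j : ℤ) : E) = 0 := by push_cast; rw [h]; ring
  obtain ⟨d, hd⟩ := (CharP.intCast_eq_zero_iff E p _).1 h0
  exact eq_of_sub_eq_mul hi hj hd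

theorem fermat_roots {p : ℕ} [Fact p.Prime] {E : Type*} [Field E] [CharP E p] {δ : E}
    (h : δ ^ p = δ) : ∃ j ∈ Finset.range p, δ = (j : E) := by
  classical
  have hp2 : 2 ≤ p := (Fact.out : p.Prime).two_le
  have hmono : (X ^ p - X : E[X]).Monic :=
    Polynomial.monic_X_pow_sub (by rw [Polynomial.degree_X]; exact_mod_cast hp2)
  have hdeg : (X ^ p - X : E[X]).natDegree = p := by
    rw [Polynomial.natDegree_sub_eq_left_of_natDegree_lt]
    · exact Polynomial.natDegree_X_pow p
    · rw [Polynomial.natDegree_X, Polynomial.natDegree_X_pow]; omega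
  have hdvd : (∏ j ∈ Finset.range p, (X - C ((j : ℕ) : E))) ∣ (X ^ p - X : E[X]) := by
    refine prod_X_sub_C_dvd _ _ ?_ ?_
    · intro i hi j hj hij
      exact natCast_inj_of_lt (Finset.mem_range.1 hi) (Finset.mem_range.1 hj) hij
    · intro i _
      simp [natCast_pow_char (L := E) (p := p) i]
  have hQm : (∏ j ∈ Finset.range p, (X - C ((j : ℕ) : E))).Monic :=
    Polynomial.monic_prod_of_monic _ _ fun j _ => Polynomial.monic_X_sub_C _
  have hdegQ : (∏ j ∈ Finset.range p, (X - C ((j : ℕ) : E))).natDegree = p := by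
    rw [Polynomial.natDegree_prod _ _ fun j _ => Polynomial.X_sub_C_ne_zero _]
    simp only [Polynomial.natDegree_X_sub_C, Finset.sum_const, Finset.card_range,
      smul_eq_mul, mul_one]
  have heq : (∏ j ∈ Finset.range p, (X - C ((j : ℕ) : E))) = X ^ p - X :=
    monic_eq_of_dvd hQm hmono hdvd (by omega)
  have hev : Polynomial.eval δ (X ^ p - X : E[X]) = 0 := by simp [h]
  rw [← heq, Polynomial.eval_prod] at hev
  obtain ⟨j, hj, hj0⟩ := Finset.prod_eq_zero_iff.1 hev
  refine ⟨j, hj, ?_⟩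
  simpa [sub_eq_zero] using hj0

end Poly

open Polynomial in
theorem main {p : ℕ} [hfp : Fact p.Prime] {K E : Type*} [Field K] [CharP K p] [Field E]
    [Algebra K E] [IsAlgClosed E]
    (v : K → ℤ) (m : ℕ) (hm : 0 < m)
    (π : K) (hπ0 : π ≠ 0) (hπ : v π = 1)
    (a : K) (ha0 : a ≠ 0) (ha : v a = -(m : ℤ))
    (α : E) (hα : α ^ p - α = algebraMap K E a)
    (w : K⟮α⟯ → ℤ)
    (hw_mul : ∀ u₁ u₂ : K⟮α⟯, u₁ ≠ 0 → u₂ ≠ 0 → w (u₁ * u₂) = w u₁ + w u₂)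
    (hw_add : ∀ u₁ u₂ : K⟮α⟯, u₁ ≠ 0 → u₂ ≠ 0 → u₁ + u₂ ≠ 0 → min (w u₁) (w u₂) ≤ w (u₁ + u₂))
    (hw_ext : ∀ z : K, z ≠ 0 → w (algebraMap K K⟮α⟯ z) = p * v z)
    (x y : ℤ) (hxy : -(m : ℤ) * x + p * y = 1)
    (ϖ : K⟮α⟯) (hϖ : ϖ = AdjoinSimple.gen K α ^ x * algebraMap K K⟮α⟯ π ^ y) :
    w (aeval ϖ (derivative (minpoly K ϖ))) = ((p : ℤ) - 1) * (1 + m) ∧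
      Algebra.norm K (aeval ϖ (derivative (minpoly K ϖ))) ≠ 0 ∧
      v (Algebra.norm K (aeval ϖ (derivative (minpoly K ϖ)))) = ((p : ℤ) - 1) * (1 + m) := by
  classical
  have hp : p.Prime := Fact.out
  have hp2 : 2 ≤ p := hp.two_le
  haveI : CharP K⟮α⟯ p := charP_of_injective_algebraMap' K (A := K⟮α⟯) p
  haveI : CharP E p := charP_of_injective_algebraMap' K (A := E) p
  have hinjL : Function.Injective (algebraMap K⟮α⟯ E) := (algebraMap K⟮α⟯ E).injective
  have hinjK : Function.Injective (algebraMap K K⟮α⟯) := (algebraMap K K⟮α⟯).injective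
  set gen : K⟮α⟯ := AdjoinSimple.gen K α with hgendef
  have hgenE : algebraMap K⟮α⟯ E gen = α := AdjoinSimple.algebraMap_gen K α
  set a' : K⟮α⟯ := algebraMap K K⟮α⟯ a with ha'def
  set π' : K⟮α⟯ := algebraMap K K⟮α⟯ π with hπ'def
  have ha'0 : a' ≠ 0 := fun h => ha0 (hinjK (by rw [← ha'def, h, map_zero]))
  have hπ'0 : π' ≠ 0 := fun h => hπ0 (hinjK (by rw [← hπ'def, h, map_zero]))
  -- the basic Artin-Schreier relation inside K⟮α⟯
  have hgenrel : gen ^ p - gen = a' := by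
    apply hinjL
    rw [map_sub, map_pow, hgenE, hα, ha'def, ← IsScalarTower.algebraMap_apply]
  have hgen0 : gen ≠ 0 := by
    intro h
    apply ha'0
    rw [← hgenrel, h, zero_pow hp.ne_zero, sub_zero]
  -- basic valuations
  have hwπ' : w π' = p := by rw [hπ'def, hw_ext π hπ0, hπ, mul_one]
  have hwa' : w a' = -(p * m : ℤ) := by rw [ha'def, hw_ext a ha0, ha]; ring
  have hpm : (0 : ℤ) < p * m := by positivity
  have hwgen : w gen = -(m : ℤ) := by
    have hgp0 : gen ^ p ≠ 0 := pow_ne_zero _ hgen0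
    have hpow : w (gen ^ p) = p * w gen := w_pow w hw_mul hgen0 p
    rcases lt_trichotomy (w gen) 0 with hneg | hzero | hpos
    · have hlt : w (gen ^ p) < w (-gen) := by
        rw [w_neg w hw_mul hgen0, hpow]; nlinarith
      obtain ⟨_, h2⟩ := w_add_lt w hw_mul hw_add hgp0 (neg_ne_zero.2 hgen0) hlt
      have heq : gen ^ p + -gen = a' := by rw [← hgenrel]; ring
      rw [heq, hpow, hwa'] at h2
      have : (p : ℤ) * w gen = (p : ℤ) * (-(m : ℤ)) := by push_cast at h2 ⊢; linarith
      exact mul_left_cancel₀ (by exact_mod_cast hp.ne_zero) this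
    · exfalso
      have heq : gen ^ p + -gen = a' := by rw [← hgenrel]; ring
      have h1 := hw_add (gen ^ p) (-gen) hgp0 (neg_ne_zero.2 hgen0) (by rw [heq]; exact ha'0)
      rw [heq, hwa', hpow, hzero, mul_zero, w_neg w hw_mul hgen0, hzero] at h1
      omega
    · exfalso
      have hlt : w (-gen) < w (gen ^ p) := by
        rw [w_neg w hw_mul hgen0, hpow]; nlinarith
      obtain ⟨_, h2⟩ := w_add_lt w hw_mul hw_add (neg_ne_zero.2 hgen0) hgp0 hlt
      have heq : -gen + gen ^ p = a' := by rw [← hgenrel]; ring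
      rw [heq, w_neg w hw_mul hgen0, hwa'] at h2
      omega
  -- the family of "conjugates" of ϖ
  set τ : ℕ → K⟮α⟯ := fun t => (gen + (t : K⟮α⟯)) ^ x * π' ^ y with hτdef
  have hτ0 : τ 0 = ϖ := by
    simp only [hτdef, hϖ, Nat.cast_zero, add_zero]
  have hwgent : ∀ t : ℕ, gen + (t : K⟮α⟯) ≠ 0 ∧ w (gen + (t : K⟮α⟯)) = -(m : ℤ) := by
    intro t
    by_cases ht : (t : K⟮α⟯) = 0
    · rw [ht, add_zero]; exact ⟨hgen0, hwgen⟩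
    · have h := w_add_lt w hw_mul hw_add hgen0 ht
        (by rw [hwgen, w_natCast_eq_zero w hw_mul (p := p) ht]; omega)
      exact ⟨h.1, by rw [h.2, hwgen]⟩
  have hτne : ∀ t : ℕ, τ t ≠ 0 ∧ w (τ t) = 1 := by
    intro t
    obtain ⟨h1, h2⟩ := hwgent t
    constructor
    · exact mul_ne_zero (zpow_ne_zero _ h1) (zpow_ne_zero _ hπ'0)
    · simp only [hτdef]
      rw [hw_mul _ _ (zpow_ne_zero _ h1) (zpow_ne_zero _ hπ'0),
        w_zpow w hw_mul h1, w_zpow w hw_mul hπ'0, h2, hwπ']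
      linarith
  have hϖ0 : ϖ ≠ 0 := hτ0 ▸ (hτne 0).1
  have hwϖ : w ϖ = 1 := hτ0 ▸ (hτne 0).2
  have hpx : ¬ (p : ℤ) ∣ x := by
    rintro ⟨d, hd⟩
    have h1 : (p : ℤ) ∣ 1 := ⟨y - m * d, by rw [hd] at hxy; linarith⟩
    have h2 := Int.le_of_dvd one_pos h1
    have : (2 : ℤ) ≤ p := by exact_mod_cast hp2
    omega
  -- difference of conjugates
  have hdiff : ∀ s t : ℕ, ¬ (p : ℤ) ∣ ((s : ℤ) - t) →
      τ s - τ t ≠ 0 ∧ w (τ s - τ t) = 1 + m := by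
    intro s t hst
    set c : K⟮α⟯ := (s : K⟮α⟯) - (t : K⟮α⟯) with hcdef
    have hceq : c = (s : K⟮α⟯) - (t : K⟮α⟯) := rfl
    have hc0 : c ≠ 0 := by
      intro h
      apply hst
      refine (CharP.intCast_eq_zero_iff K⟮α⟯ p _).1 ?_
      push_cast
      rw [← hceq]
      exact h
    have hcpow : c ^ p = c := by
      rw [hceq, sub_pow_char, natCast_pow_char, natCast_pow_char]
    have hwc : w c = 0 := w_fermat w hw_mul hc0 hp2 hcpow
    obtain ⟨hβ0, hwβ⟩ := hwgent t
    have hu0 : c * (gen + (t : K⟮α⟯))⁻¹ ≠ 0 := mul_ne_zero hc0 (inv_ne_zero hβ0)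
    have hwu : w (c * (gen + (t : K⟮α⟯))⁻¹) = m := by
      rw [hw_mul _ _ hc0 (inv_ne_zero hβ0), hwc, w_inv w hw_mul hβ0, hwβ]; ring
    obtain ⟨hone, hwone⟩ := w_one_add_zpow w hw_mul hw_add (p := p) hu0 (by omega) (t := x) hpx
    have hsβ : gen + (s : K⟮α⟯) = (gen + (t : K⟮α⟯)) * (1 + c * (gen + (t : K⟮α⟯))⁻¹) := by
      rw [hceq]
      field_simp
      ring
    have hkey : τ s - τ t =
        (gen + (t : K⟮α⟯)) ^ x * ((1 + c * (gen + (t : K⟮α⟯))⁻¹) ^ x - 1) * π' ^ y := by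
      simp only [hτdef]
      rw [hsβ, mul_zpow]
      ring
    have hne1 : (gen + (t : K⟮α⟯)) ^ x * ((1 + c * (gen + (t : K⟮α⟯))⁻¹) ^ x - 1) * π' ^ y ≠ 0 :=
      mul_ne_zero (mul_ne_zero (zpow_ne_zero _ hβ0) hone) (zpow_ne_zero _ hπ'0)
    refine ⟨by rw [hkey]; exact hne1, ?_⟩
    rw [hkey, hw_mul _ _ (mul_ne_zero (zpow_ne_zero _ hβ0) hone) (zpow_ne_zero _ hπ'0),
      hw_mul _ _ (zpow_ne_zero _ hβ0) hone, w_zpow w hw_mul hβ0, w_zpow w hw_mul hπ'0,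
      hwβ, hwπ', hwone, hwu]
    linarith
  -- the Artin-Schreier polynomial
  set Pas : Polynomial K := X ^ p - (X + C a) with hPasdef
  have hPasmonic : Pas.Monic := by
    refine Polynomial.monic_X_pow_sub ?_
    refine lt_of_le_of_lt (Polynomial.degree_add_le _ _) ?_
    rw [Polynomial.degree_X]
    have h1 : (1 : WithBot ℕ) < (p : ℕ) := by exact_mod_cast (by omega : 1 < p)
    have h2 : (C a).degree < ((p : ℕ) : WithBot ℕ) :=
      lt_of_le_of_lt Polynomial.degree_C_le (by exact_mod_cast (by omega : 0 < p))
    exact max_lt h1 h2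
  have hPasdeg : Pas.natDegree = p := by
    rw [hPasdef, Polynomial.natDegree_sub_eq_left_of_natDegree_lt, Polynomial.natDegree_X_pow]
    refine lt_of_le_of_lt (Polynomial.natDegree_add_le _ _) ?_
    rw [Polynomial.natDegree_X]
    have := Polynomial.natDegree_C a
    rw [Polynomial.natDegree_X_pow]
    omega
  have hPas0 : Pas ≠ 0 := hPasmonic.ne_zero
  have hαroot : aeval α Pas = 0 := by
    rw [hPasdef]
    simp only [map_sub, map_add, aeval_X_pow, aeval_X, aeval_C]
    linear_combination hα
  have hint : IsIntegral K α := ⟨Pas, hPasmonic, by rwa [Polynomial.aeval_def] at hαroot⟩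
  haveI hFD : FiniteDimensional K K⟮α⟯ := adjoin.finiteDimensional hint
  have hdvdα : minpoly K α ∣ Pas := minpoly.dvd K α hαroot
  -- linear independence of powers of ϖ
  have hindep : LinearIndependent K (fun i : Fin p => ϖ ^ (i : ℕ)) := by
    rw [Fintype.linearIndependent_iff]
    intro g hg i
    by_contra hgi
    set s : Finset (Fin p) := Finset.univ.filter (fun j : Fin p => g j ≠ 0) with hsdef
    have hsne : s.Nonempty := ⟨i, by simp [hsdef, hgi]⟩
    have hterm : ∀ j ∈ s, g j • ϖ ^ (j : ℕ) ≠ 0 := by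
      intro j hj
      have hgj : g j ≠ 0 := by simpa [hsdef] using hj
      exact smul_ne_zero hgj (pow_ne_zero _ hϖ0)
    have hwterm : ∀ j ∈ s, w (g j • ϖ ^ (j : ℕ)) = p * v (g j) + (j : ℕ) := by
      intro j hj
      have hgj : g j ≠ 0 := by simpa [hsdef] using hj
      have hgj' : algebraMap K K⟮α⟯ (g j) ≠ 0 := fun h => hgj (hinjK (by rw [h, map_zero]))
      rw [Algebra.smul_def, hw_mul _ _ hgj' (pow_ne_zero _ hϖ0), hw_ext _ hgj,
        w_pow w hw_mul hϖ0, hwϖ, mul_one]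
    have hzero : ∑ j ∈ s, g j • ϖ ^ (j : ℕ) = 0 := by
      rw [hsdef, Finset.sum_filter_of_ne (fun j _ hj => by
        intro h; exact hj (by rw [h, zero_smul]))]
      exact hg
    refine w_sum w hw_mul hw_add s _ hterm ?_ hsne hzero
    intro i' hi' j' hj' hne
    rw [hwterm _ hi', hwterm _ hj']
    intro heq
    have hd : ((i' : ℕ) : ℤ) - ((j' : ℕ) : ℤ) = p * (v (g j') - v (g i')) := by linarith
    exact hne (Fin.ext (eq_of_sub_eq_mul i'.2 j'.2 hd))
  have hfin : p ≤ Module.finrank K K⟮α⟯ := by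
    simpa using hindep.fintype_card_le_finrank
  have hfr : Module.finrank K K⟮α⟯ = (minpoly K α).natDegree := adjoin.finrank hint
  have hdegle : (minpoly K α).natDegree ≤ p := by
    have := Polynomial.natDegree_le_of_dvd hdvdα hPas0
    omega
  have hminα : minpoly K α = Pas :=
    monic_eq_of_dvd (minpoly.monic hint) hPasmonic hdvdα (by omega)
  have hfrp : Module.finrank K K⟮α⟯ = p := by omega
  -- the conjugation endomorphisms
  set pb : PowerBasis K K⟮α⟯ := adjoin.powerBasis hint with hpbdef
  have hpbgen : pb.gen = gen := by rw [hpbdef, adjoin.powerBasis_gen]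
  have hrootgen : ∀ j : ℕ, aeval (gen + (j : K⟮α⟯)) (minpoly K pb.gen) = 0 := by
    intro j
    rw [hpbgen, hgendef, minpoly_gen, ← hgendef, hminα, hPasdef]
    simp only [map_sub, map_add, aeval_X_pow, aeval_X, aeval_C]
    rw [add_pow_char, natCast_pow_char]
    rw [← ha'def]
    linear_combination hgenrel
  set σ : ℕ → (K⟮α⟯ →ₐ[K] K⟮α⟯) := fun j => pb.lift (gen + (j : K⟮α⟯)) (hrootgen j) with hσdef
  have hσgen : ∀ j : ℕ, σ j gen = gen + (j : K⟮α⟯) := by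
    intro j
    have h := pb.lift_gen (gen + (j : K⟮α⟯)) (hrootgen j)
    rw [hpbgen] at h
    exact h
  have hσπ' : ∀ j : ℕ, σ j π' = π' := fun j => (σ j).commutes π
  have hστ : ∀ j t : ℕ, σ j (τ t) = τ (j + t) := by
    intro j t
    simp only [hτdef]
    rw [map_mul, map_zpow₀, map_zpow₀, map_add, hσgen, hσπ', map_natCast]
    congr 2
    push_cast
    ring
  have hσϖ : ∀ j : ℕ, σ j ϖ = τ j := by
    intro j
    rw [← hτ0, hστ j 0, Nat.add_zero]
  -- ϖ is integral, minpoly of ϖ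
  have hϖint : IsIntegral K ϖ := Algebra.IsIntegral.isIntegral ϖ
  have hPkm : (minpoly K ϖ).Monic := minpoly.monic hϖint
  set Pm : Polynomial K⟮α⟯ := (minpoly K ϖ).map (algebraMap K K⟮α⟯) with hPmdef
  have hPmm : Pm.Monic := hPkm.map _
  have hPm0 : Pm ≠ 0 := hPmm.ne_zero
  have hPmdeg : Pm.natDegree = (minpoly K ϖ).natDegree := Polynomial.natDegree_map _
  have hrootτ : ∀ j : ℕ, Pm.eval (τ j) = 0 := by
    intro j
    have h1 : aeval (τ j) (minpoly K ϖ) = 0 := by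
      rw [← hσϖ j, Polynomial.aeval_algHom_apply, minpoly.aeval, map_zero]
    rwa [hPmdef, Polynomial.eval_map, ← Polynomial.aeval_def]
  have hτinj : ∀ i ∈ Finset.range p, ∀ j ∈ Finset.range p, τ i = τ j → i = j := by
    intro i hi j hj hij
    by_contra hne
    have hnd : ¬ (p : ℤ) ∣ ((i : ℤ) - j) := by
      rintro ⟨d, hd⟩
      exact hne (eq_of_sub_eq_mul (Finset.mem_range.1 hi) (Finset.mem_range.1 hj) hd)
    exact (hdiff i j hnd).1 (by rw [hij, sub_self])
  set Q : Polynomial K⟮α⟯ := ∏ j ∈ Finset.range p, (X - C (τ j)) with hQdef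
  have hQdvd : Q ∣ Pm := prod_X_sub_C_dvd _ _ hτinj fun j _ => hrootτ j
  have hQm : Q.Monic := Polynomial.monic_prod_of_monic _ _ fun j _ => Polynomial.monic_X_sub_C _
  have hQdeg : Q.natDegree = p := by
    rw [hQdef, Polynomial.natDegree_prod _ _ fun j _ => Polynomial.X_sub_C_ne_zero _]
    simp only [Polynomial.natDegree_X_sub_C, Finset.sum_const, Finset.card_range,
      smul_eq_mul, mul_one]
  have hPmdegp : Pm.natDegree = p := by
    have h1 : Q.natDegree ≤ Pm.natDegree := Polynomial.natDegree_le_of_dvd hQdvd hPm0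
    have h2 : (minpoly K ϖ).natDegree ≤ p := hfrp ▸ minpoly.natDegree_le ϖ
    omega
  have hQPm : Q = Pm := monic_eq_of_dvd hQm hPmm hQdvd (by omega)
  -- the different: value of the derivative
  have hz : aeval ϖ (derivative (minpoly K ϖ)) = ∏ j ∈ (Finset.range p).erase 0, (ϖ - τ j) := by
    have h1 : aeval ϖ (derivative (minpoly K ϖ)) = Pm.derivative.eval ϖ := by
      rw [Polynomial.aeval_def, Polynomial.eval₂_eq_eval_map, hPmdef, Polynomial.derivative_map]
    have h2 : Q = (X - C (τ 0)) * ∏ j ∈ (Finset.range p).erase 0, (X - C (τ j)) :=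
      (Finset.mul_prod_erase _ _ (Finset.mem_range.2 (by omega))).symm
    rw [h1, ← hQPm, h2, Polynomial.derivative_mul, Polynomial.derivative_X_sub_C, one_mul,
      Polynomial.eval_add, Polynomial.eval_mul, Polynomial.eval_sub, Polynomial.eval_X,
      Polynomial.eval_C, hτ0, sub_self, zero_mul, add_zero, Polynomial.eval_prod]
    refine Finset.prod_congr rfl fun j hj => ?_
    rw [Polynomial.eval_sub, Polynomial.eval_X, Polynomial.eval_C]
  have hfac : ∀ j ∈ (Finset.range p).erase 0, ϖ - τ j ≠ 0 ∧ w (ϖ - τ j) = 1 + m := by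
    intro j hj
    obtain ⟨hj0, hjp⟩ := Finset.mem_erase.1 hj
    have hnd : ¬ (p : ℤ) ∣ ((0 : ℤ) - j) := by
      rintro ⟨d, hd⟩
      exact hj0 (eq_of_sub_eq_mul (by omega) (Finset.mem_range.1 hjp) (by push_cast; push_cast at hd; linarith)).symm
    have := hdiff 0 j (by push_cast; push_cast at hnd; exact hnd)
    rwa [hτ0] at this
  have hz0 : aeval ϖ (derivative (minpoly K ϖ)) ≠ 0 := by
    rw [hz]
    exact Finset.prod_ne_zero_iff.2 fun j hj => (hfac j hj).1
  have hcard : ((Finset.range p).erase 0).card = p - 1 := by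
    rw [Finset.card_erase_of_mem (Finset.mem_range.2 (by omega)), Finset.card_range]
  have hwz : w (aeval ϖ (derivative (minpoly K ϖ))) = ((p : ℤ) - 1) * (1 + m) := by
    rw [hz, w_prod w hw_mul _ _ fun j hj => (hfac j hj).1]
    rw [Finset.sum_congr rfl fun j hj => (hfac j hj).2, Finset.sum_const, hcard]
    rw [nsmul_eq_mul]
    push_cast [Nat.cast_sub (by omega : 1 ≤ p)]
    ring
  refine ⟨hwz, ?_⟩
  -- separability
  have hsep : IsSeparable K α := by
    show (minpoly K α).Separable
    rw [hminα]
    have hder : derivative Pas = -1 := by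
      rw [hPasdef]
      simp [Polynomial.derivative_X_pow, CharP.cast_eq_zero K p]
    rw [Polynomial.separable_def, hder]
    exact isCoprime_one_right.neg_right
  haveI : Algebra.IsSeparable K K⟮α⟯ := (isSeparable_adjoin_simple_iff_isSeparable K E).2 hsep
  -- the embeddings into E
  set e : ℕ → (K⟮α⟯ →ₐ[K] E) := fun j => (IsScalarTower.toAlgHom K K⟮α⟯ E).comp (σ j) with hedef
  have heσ : ∀ (j : ℕ) (z : K⟮α⟯), e j z = algebraMap K⟮α⟯ E (σ j z) := fun j z => rfl
  have hegen : ∀ j : ℕ, e j gen = α + (j : E) := by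
    intro j
    rw [heσ, hσgen, map_add, hgenE, map_natCast]
  have hesurj : ∀ f : K⟮α⟯ →ₐ[K] E, ∃ j ∈ Finset.range p, f = e j := by
    intro f
    have hrel : (f gen) ^ p - f gen = algebraMap K E a := by
      have h1 := congrArg f hgenrel
      rw [map_sub, map_pow, ha'def, AlgHom.commutes] at h1
      exact h1
    have hδ : (f gen - α) ^ p = f gen - α := by
      rw [sub_pow_char]
      linear_combination hrel - hα
    obtain ⟨j, hj, hδj⟩ := fermat_roots hδ
    refine ⟨j, hj, ?_⟩
    have hfgen : f gen = e j gen := by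
      rw [hegen]
      linear_combination hδj
    refine pb.algHom_ext ?_
    rw [hpbgen, hfgen]
  have heinj : ∀ i ∈ Finset.range p, ∀ j ∈ Finset.range p, e i = e j → i = j := by
    intro i hi j hj hij
    have h1 : e i gen = e j gen := by rw [hij]
    rw [hegen, hegen] at h1
    have hc : (i : E) = j := by linear_combination h1
    exact natCast_inj_of_lt (Finset.mem_range.1 hi) (Finset.mem_range.1 hj) hc
  have hnormprod : algebraMap K E (Algebra.norm K (aeval ϖ (derivative (minpoly K ϖ)))) =
      ∏ j ∈ Finset.range p, e j (aeval ϖ (derivative (minpoly K ϖ))) := by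
    rw [Algebra.norm_eq_prod_embeddings K E _]
    exact (Finset.prod_bij (fun j _ => e j) (fun j _ => Finset.mem_univ _)
      (fun a₁ h₁ a₂ h₂ h => heinj a₁ h₁ a₂ h₂ h)
      (fun f _ => by obtain ⟨j, hj, hfj⟩ := hesurj f; exact ⟨j, hj, hfj.symm⟩)
      (fun j _ => rfl)).symm
  -- the global product
  set Wel : K⟮α⟯ := ∏ j ∈ Finset.range p, ∏ l ∈ (Finset.range p).erase 0, (τ j - τ (j + l))
    with hWdef
  have hfac2 : ∀ j ∈ Finset.range p, ∀ l ∈ (Finset.range p).erase 0,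
      τ j - τ (j + l) ≠ 0 ∧ w (τ j - τ (j + l)) = 1 + m := by
    intro j _ l hl
    obtain ⟨hl0, hlp⟩ := Finset.mem_erase.1 hl
    refine hdiff j (j + l) ?_
    rintro ⟨d, hd⟩
    have hd' : (l : ℤ) - (0 : ℕ) = p * (-d) := by push_cast at hd ⊢; linarith
    exact hl0 (eq_of_sub_eq_mul (Finset.mem_range.1 hlp) (by omega) hd')
  have hW0 : Wel ≠ 0 := Finset.prod_ne_zero_iff.2 fun j hj =>
    Finset.prod_ne_zero_iff.2 fun l hl => (hfac2 j hj l hl).1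
  have hwW : w Wel = p * (((p : ℤ) - 1) * (1 + m)) := by
    rw [hWdef, w_prod w hw_mul _ _ fun j hj =>
      Finset.prod_ne_zero_iff.2 fun l hl => (hfac2 j hj l hl).1]
    rw [Finset.sum_congr rfl fun j hj =>
      w_prod w hw_mul _ _ fun l hl => (hfac2 j hj l hl).1]
    rw [Finset.sum_congr rfl fun j hj => Finset.sum_congr rfl fun l hl => (hfac2 j hj l hl).2]
    simp only [Finset.sum_const, hcard, Finset.card_range, nsmul_eq_mul]
    push_cast [Nat.cast_sub (by omega : 1 ≤ p)]
    ring
  have hkeyN : algebraMap K K⟮α⟯ (Algebra.norm K (aeval ϖ (derivative (minpoly K ϖ)))) = Wel := by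
    apply hinjL
    rw [← IsScalarTower.algebraMap_apply, hnormprod, hWdef, map_prod]
    refine Finset.prod_congr rfl fun j _ => ?_
    have hσz : σ j (aeval ϖ (derivative (minpoly K ϖ))) =
        ∏ l ∈ (Finset.range p).erase 0, (τ j - τ (j + l)) := by
      rw [hz, map_prod]
      refine Finset.prod_congr rfl fun l _ => ?_
      rw [map_sub, hσϖ, hστ]
    rw [heσ, hσz]
  have hN0 : Algebra.norm K (aeval ϖ (derivative (minpoly K ϖ))) ≠ 0 := by
    intro h
    rw [h, map_zero] at hkeyN
    exact hW0 hkeyN.symm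
  refine ⟨hN0, ?_⟩
  have h1 := hw_ext _ hN0
  rw [hkeyN, hwW] at h1
  exact (mul_left_cancel₀ (show ((p : ℕ) : ℤ) ≠ 0 from by exact_mod_cast hp.ne_zero) h1).symm

end Stmt16


open IntermediateField

/- STATEMENT 16: K local of characteristic p, m > 0 prime to p, L = K(α) with
α^p - α = a, v_K(a) = -m.  Then v_L(D_{L|K}) = (p-1)(1+m) and
v_K(d_{L|K}) = (p-1)(1+m).  Since o_L = o_K[ϖ] for the uniformiser
ϖ = α^x π^y (with -mx + py = 1), the different is generated by P'(ϖ) where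
P = minpoly_K(ϖ); and since L|K is totally ramified, d_{L|K} = N_{L|K}(D_{L|K})
has v_K(d_{L|K}) = v_L(D_{L|K}).  The hypotheses on w say that w is the
normalized valuation of L, extending p·v_K. -/
theorem stmt16 (p : ℕ) [Fact p.Prime] (k : Type*) [Field k] [Fintype k] [CharP k p]
    (m : ℕ) (hm : 0 < m) (hmp : ¬ p ∣ m)
    (π : LaurentSeries k) (hπ0 : π ≠ 0) (hπ : π.order = 1)
    (a : LaurentSeries k) (ha0 : a ≠ 0) (ha : a.order = -(m : ℤ))
    (α : AlgebraicClosure (LaurentSeries k))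
    (hα : α ^ p - α = algebraMap (LaurentSeries k) (AlgebraicClosure (LaurentSeries k)) a)
    (w : (LaurentSeries k)⟮α⟯ → ℤ)
    (hw_mul : ∀ u v : (LaurentSeries k)⟮α⟯, u ≠ 0 → v ≠ 0 → w (u * v) = w u + w v)
    (hw_add : ∀ u v : (LaurentSeries k)⟮α⟯, u ≠ 0 → v ≠ 0 → u + v ≠ 0 →
      min (w u) (w v) ≤ w (u + v))
    (hw_ext : ∀ z : LaurentSeries k, z ≠ 0 →
      w (algebraMap (LaurentSeries k) (LaurentSeries k)⟮α⟯ z) = p * z.order)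
    (x y : ℤ) (hxy : -(m : ℤ) * x + p * y = 1)
    (ϖ : (LaurentSeries k)⟮α⟯)
    (hϖ : ϖ = (AdjoinSimple.gen (LaurentSeries k) α) ^ x *
      (algebraMap (LaurentSeries k) (LaurentSeries k)⟮α⟯ π) ^ y) :
    w (Polynomial.aeval ϖ (Polynomial.derivative (minpoly (LaurentSeries k) ϖ))) =
        ((p : ℤ) - 1) * (1 + m) ∧
      (Algebra.norm (LaurentSeries k)
          (Polynomial.aeval ϖ (Polynomial.derivative (minpoly (LaurentSeries k) ϖ)))).order =
        ((p : ℤ) - 1) * (1 + m) := by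
  haveI : CharP (LaurentSeries k) p :=
    charP_of_injective_algebraMap' k (A := LaurentSeries k) p
  obtain ⟨h1, h2, h3⟩ := Stmt16.main (fun z : LaurentSeries k => z.order) m hm
    π hπ0 hπ a ha0 ha α hα w hw_mul hw_add hw_ext x y hxy ϖ hϖ
  exact ⟨h1, h3⟩
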